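/- arXiv:1706.04437 — 5 statements merged into one kernel-verified Lean document; each statement's English description precedes it below -/
import Mathlib

section
/- Let A be a Banach algebra with a bounded approximate identity and σ : A → A a continuous algebra homomorphism with dense range. If A is σ-biflat, then A is biflat. -/
set_option maxHeartbeats 1000000


/-!
Statement 4: Let A be a Banach algebra with a bounded approximate identity
and σ : A → A a continuous algebra homomorphism with dense range. If A is
σ-biflat, then A is biflat.

The projective tensor product `A ⊗̂ A` is modelled abstractly as a Banach
space `E` with a continuous bilinear cross-norm map `tm` satisfying the
isometric universal property, the canonical `A`-bimodule actions `l`, `r`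
and the diagonal map `pr`.  A bounded approximate identity is a bounded net
`(e i)` with `e i * a → a` and `a * e i → a` for every `a`.
-/

universe u

open Filter

theorem sigma_biflat_implies_biflat_of_denseRange
    -- A is a Banach algebra
    (A : Type u) [NonUnitalNormedRing A] [NormedSpace ℂ A]
    [IsScalarTower ℂ A A] [SMulCommClass ℂ A A] [CompleteSpace A]
    -- σ is a continuous algebra homomorphism on A with dense range
    (σ : A →L[ℂ] A) (hσ : ∀ a b : A, σ (a * b) = σ a * σ b)
    (hdense : DenseRange ⇑σ)
    -- A has a bounded approximate identity (a bounded net)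
    (ι : Type u) [Preorder ι] [IsDirected ι (· ≤ ·)] [Nonempty ι]
    (e : ι → A) (Cb : ℝ) (hCb : ∀ i, ‖e i‖ ≤ Cb)
    (hbai : ∀ a : A, Tendsto (fun i => e i * a) atTop (nhds a) ∧
                     Tendsto (fun i => a * e i) atTop (nhds a))
    -- E is the projective tensor product A ⊗̂ A
    (E : Type u) [NormedAddCommGroup E] [NormedSpace ℂ E] [CompleteSpace E]
    (tm : A →L[ℂ] A →L[ℂ] E)
    (htm_norm : ∀ a b : A, ‖tm a b‖ = ‖a‖ * ‖b‖)
    (htm_univ : ∀ (X : Type u) [NormedAddCommGroup X] [NormedSpace ℂ X]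
      [CompleteSpace X] (f : A →L[ℂ] A →L[ℂ] X),
      ∃! g : E →L[ℂ] X, (∀ a b : A, g (tm a b) = f a b) ∧ ‖g‖ = ‖f‖)
    -- the A-bimodule actions on E
    (l r : A →L[ℂ] E →L[ℂ] E)
    (hl : ∀ a b c : A, l a (tm b c) = tm (a * b) c)
    (hr : ∀ a b c : A, r a (tm b c) = tm b (c * a))
    -- the diagonal map π
    (pr : E →L[ℂ] A)
    (hpr : ∀ a b : A, pr (tm a b) = a * b)
    -- A is σ-biflat
    (hsbiflat : ∃ ρ₀ : (E →L[ℂ] ℂ) →L[ℂ] (A →L[ℂ] ℂ),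
      (∀ (a : A) (lam : E →L[ℂ] ℂ) (b : A),
        ρ₀ (lam.comp (r (σ a))) b = ρ₀ lam (b * a)) ∧
      (∀ (a : A) (lam : E →L[ℂ] ℂ) (b : A),
        ρ₀ (lam.comp (l (σ a))) b = ρ₀ lam (a * b)) ∧
      (∀ mu : A →L[ℂ] ℂ, ρ₀ (mu.comp pr) = mu.comp σ)) :
    -- Then A is biflat
    ∃ ρ : (E →L[ℂ] ℂ) →L[ℂ] (A →L[ℂ] ℂ),
      (∀ (a : A) (lam : E →L[ℂ] ℂ) (b : A),
        ρ (lam.comp (r a)) b = ρ lam (b * a)) ∧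
      (∀ (a : A) (lam : E →L[ℂ] ℂ) (b : A),
        ρ (lam.comp (l a)) b = ρ lam (a * b)) ∧
      (∀ mu : A →L[ℂ] ℂ, ρ (mu.comp pr) = mu) := by
  obtain ⟨ρ₀, h1, h2, h3⟩ := hsbiflat
  haveI hNB : (atTop : Filter ι).NeBot :=
    Filter.atTop_neBot_iff.mpr ⟨‹Nonempty ι›, ‹IsDirected ι (· ≤ ·)›⟩
  set U : Ultrafilter ι := Ultrafilter.of atTop with hUdef
  have hUle : (U : Filter ι) ≤ atTop := Ultrafilter.of_le _
  have hCb0 : 0 ≤ Cb := le_trans (norm_nonneg _) (hCb (Classical.arbitrary ι))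
  -- the ultrafilter-limit functional along the BAI
  have hex : ∀ μ : A →L[ℂ] ℂ, ∃ z : ℂ,
      Tendsto (fun i => μ (e i)) (U : Filter ι) (nhds z) := by
    intro μ
    have hmem : (↑(U.map fun i => μ (e i)) : Filter ℂ) ≤
        Filter.principal (Metric.closedBall (0:ℂ) (‖μ‖ * Cb)) := by
      rw [Ultrafilter.coe_map]
      refine Filter.le_principal_iff.mpr (Filter.mem_map.mpr (Filter.univ_mem' fun i => ?_))
      simp only [Set.mem_preimage, Metric.mem_closedBall, dist_zero_right]
      calc ‖μ (e i)‖ ≤ ‖μ‖ * ‖e i‖ := μ.le_opNorm _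
        _ ≤ ‖μ‖ * Cb := mul_le_mul_of_nonneg_left (hCb i) (norm_nonneg μ)
    obtain ⟨z, -, hz⟩ := (isCompact_closedBall (0:ℂ) (‖μ‖ * Cb)).ultrafilter_le_nhds
      (U.map fun i => μ (e i)) hmem
    rw [Ultrafilter.coe_map] at hz
    exact ⟨z, hz⟩
  choose Φ hΦ using hex
  have hΦeq : ∀ (μ : A →L[ℂ] ℂ) (z : ℂ),
      Tendsto (fun i => μ (e i)) (U : Filter ι) (nhds z) → Φ μ = z :=
    fun μ z h => tendsto_nhds_unique (hΦ μ) h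
  have hadd : ∀ μ ν : A →L[ℂ] ℂ, Φ (μ + ν) = Φ μ + Φ ν := by
    intro μ ν
    refine hΦeq _ _ ?_
    simpa using (hΦ μ).add (hΦ ν)
  have hsmul : ∀ (c : ℂ) (μ : A →L[ℂ] ℂ), Φ (c • μ) = c • Φ μ := by
    intro c μ
    refine hΦeq _ _ ?_
    simpa using (hΦ μ).const_smul c
  have hbdd : ∀ μ : A →L[ℂ] ℂ, ‖Φ μ‖ ≤ Cb * ‖μ‖ := by
    intro μ
    refine le_of_tendsto (hΦ μ).norm (Filter.Eventually.of_forall fun i => ?_)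
    calc ‖μ (e i)‖ ≤ ‖μ‖ * ‖e i‖ := μ.le_opNorm _
      _ ≤ ‖μ‖ * Cb := mul_le_mul_of_nonneg_left (hCb i) (norm_nonneg μ)
      _ = Cb * ‖μ‖ := mul_comm _ _
  let Φcl : (A →L[ℂ] ℂ) →L[ℂ] ℂ :=
    LinearMap.mkContinuous
      { toFun := Φ, map_add' := hadd, map_smul' := hsmul } Cb hbdd
  have hΦcl : ∀ μ, Φcl μ = Φ μ := fun _ => rfl
  -- the candidate ρ
  let ρ : (E →L[ℂ] ℂ) →L[ℂ] (A →L[ℂ] ℂ) :=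
    LinearMap.mkContinuous₂
      (LinearMap.mk₂ ℂ (fun lam b => Φcl (ρ₀ (lam.comp (r b))))
        (by intro lam lam' b
            simp [ContinuousLinearMap.add_comp])
        (by intro c lam b
            simp [ContinuousLinearMap.smul_comp])
        (by intro lam b b'
            simp [ContinuousLinearMap.comp_add])
        (by intro c lam b
            have h' : lam.comp (r (c • b)) = c • lam.comp (r b) := by
              ext x; simp
            simp [h']))
      (‖Φcl‖ * ‖ρ₀‖ * ‖r‖)
      (by intro lam b
          calc ‖Φcl (ρ₀ (lam.comp (r b)))‖
              ≤ ‖Φcl‖ * ‖ρ₀ (lam.comp (r b))‖ := Φcl.le_opNorm _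
            _ ≤ ‖Φcl‖ * (‖ρ₀‖ * ‖lam.comp (r b)‖) := by
                gcongr; exact ρ₀.le_opNorm _
            _ ≤ ‖Φcl‖ * (‖ρ₀‖ * (‖lam‖ * ‖r b‖)) := by
                gcongr; exact lam.opNorm_comp_le _
            _ ≤ ‖Φcl‖ * (‖ρ₀‖ * (‖lam‖ * (‖r‖ * ‖b‖))) := by
                gcongr; exact r.le_opNorm b
            _ = ‖Φcl‖ * ‖ρ₀‖ * ‖r‖ * ‖lam‖ * ‖b‖ := by ring)
  have hρ : ∀ (lam : E →L[ℂ] ℂ) (b : A), ρ lam b = Φcl (ρ₀ (lam.comp (r b))) :=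
    fun _ _ => rfl
  -- density equalizer helper
  have hkey : ∀ (f g : A → ℂ), Continuous f → Continuous g →
      (∀ s : A, f (σ s) = g (σ s)) → ∀ x, f x = g x := by
    intro f g hf hg h x
    exact congrFun (hdense.equalizer hf hg (funext h)) x
  -- Claim A, step 1 (density in a, second slot σ d)
  have hA1 : ∀ (lam : E →L[ℂ] ℂ) (d c a : A),
      ρ₀ ((lam.comp (r a)).comp (r (σ d))) c = ρ₀ (lam.comp (r (σ d * a))) c := by
    intro lam d c
    refine hkey _ _ ?_ ?_ ?_
    · exact (ρ₀.continuous.comp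
        ((continuous_const.clm_comp r.continuous).clm_comp continuous_const)).clm_apply
        continuous_const
    · exact (ρ₀.continuous.comp
        (continuous_const.clm_comp
          (r.continuous.comp (continuous_const.mul continuous_id)))).clm_apply
        continuous_const
    · intro t
      rw [h1 d (lam.comp (r (σ t))) c, h1 t lam (c * d), ← hσ, h1 (d * t) lam c,
        mul_assoc]
  -- Claim A (full)
  have hA : ∀ (lam : E →L[ℂ] ℂ) (a b c : A),
      ρ₀ ((lam.comp (r a)).comp (r b)) c = ρ₀ (lam.comp (r (b * a))) c := by
    intro lam a b c
    refine hkey (fun b => ρ₀ ((lam.comp (r a)).comp (r b)) c)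
      (fun b => ρ₀ (lam.comp (r (b * a))) c) ?_ ?_ (fun d => hA1 lam d c a) b
    · exact (ρ₀.continuous.comp
        ((continuous_const.clm_comp continuous_const).clm_comp r.continuous)).clm_apply
        continuous_const
    · exact (ρ₀.continuous.comp
        (continuous_const.clm_comp
          (r.continuous.comp (continuous_id.mul continuous_const)))).clm_apply
        continuous_const
  -- Claim B1, step 1
  have hB1a : ∀ (lam : E →L[ℂ] ℂ) (t c a : A),
      ρ₀ ((lam.comp (l a)).comp (r (σ t))) c
        = ρ₀ ((lam.comp (r (σ t))).comp (l a)) c := by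
    intro lam t c
    refine hkey _ _ ?_ ?_ ?_
    · exact (ρ₀.continuous.comp
        ((continuous_const.clm_comp l.continuous).clm_comp continuous_const)).clm_apply
        continuous_const
    · exact (ρ₀.continuous.comp
        (continuous_const.clm_comp l.continuous)).clm_apply continuous_const
    · intro s
      rw [h1 t (lam.comp (l (σ s))) c, h2 s lam (c * t),
        h2 s (lam.comp (r (σ t))) c, h1 t lam (s * c), mul_assoc]
  -- Claim B1 (full)
  have hB1 : ∀ (lam : E →L[ℂ] ℂ) (a b c : A),
      ρ₀ ((lam.comp (l a)).comp (r b)) c = ρ₀ ((lam.comp (r b)).comp (l a)) c := by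
    intro lam a b c
    refine hkey (fun b => ρ₀ ((lam.comp (l a)).comp (r b)) c)
      (fun b => ρ₀ ((lam.comp (r b)).comp (l a)) c) ?_ ?_
      (fun t => hB1a lam t c a) b
    · exact (ρ₀.continuous.comp
        (continuous_const.clm_comp r.continuous)).clm_apply continuous_const
    · exact (ρ₀.continuous.comp
        ((continuous_const.clm_comp r.continuous).clm_comp continuous_const)).clm_apply
        continuous_const
  -- limit facts
  have hR : ∀ (μ : E →L[ℂ] ℂ) (s : A), Φcl (ρ₀ (μ.comp (r (σ s)))) = ρ₀ μ s := by
    intro μ s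
    rw [hΦcl]
    refine hΦeq _ _ ?_
    have h := ((ρ₀ μ).continuous.tendsto s).comp (((hbai s).1).mono_left hUle)
    simpa [Function.comp_def, h1 s μ] using h
  have hL : ∀ (μ : E →L[ℂ] ℂ) (s : A), Φcl (ρ₀ (μ.comp (l (σ s)))) = ρ₀ μ s := by
    intro μ s
    rw [hΦcl]
    refine hΦeq _ _ ?_
    have h := ((ρ₀ μ).continuous.tendsto s).comp (((hbai s).2).mono_left hUle)
    simpa [Function.comp_def, h2 s μ] using h
  -- σ(e i) is a left BAI for A
  have hsb : ∀ b : A, Tendsto (fun i => σ (e i) * b) atTop (nhds b) := by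
    intro b
    rw [Metric.tendsto_nhds]
    intro ε hε
    set K : ℝ := ‖σ‖ * Cb + 1 with hK
    have hK1 : (1:ℝ) ≤ K := le_add_of_nonneg_left (mul_nonneg (norm_nonneg _) hCb0)
    have hK0 : (0:ℝ) < K := lt_of_lt_of_le one_pos hK1
    obtain ⟨s, hs⟩ := hdense.exists_dist_lt b (show (0:ℝ) < ε / (4 * K) by positivity)
    have hmid := (Metric.tendsto_nhds.mp (hbai s).1) (ε / (4 * (‖σ‖ + 1)))
      (by positivity)
    filter_upwards [hmid] with i hi
    have hbd : ‖σ (e i)‖ ≤ K := by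
      calc ‖σ (e i)‖ ≤ ‖σ‖ * ‖e i‖ := σ.le_opNorm _
        _ ≤ ‖σ‖ * Cb := mul_le_mul_of_nonneg_left (hCb i) (norm_nonneg σ)
        _ ≤ K := le_add_of_nonneg_right zero_le_one
    have e1 : ‖σ (e i) * b - σ (e i) * σ s‖ ≤ K * (ε / (4 * K)) := by
      rw [← mul_sub]
      calc ‖σ (e i) * (b - σ s)‖ ≤ ‖σ (e i)‖ * ‖b - σ s‖ := norm_mul_le _ _
        _ ≤ K * (ε / (4 * K)) := by
            have hbs : ‖b - σ s‖ ≤ ε / (4 * K) := by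
              rw [dist_eq_norm] at hs; exact hs.le
            exact mul_le_mul hbd hbs (norm_nonneg _) hK0.le
    have e2 : ‖σ (e i) * σ s - σ s‖ < ε / 4 := by
      rw [← hσ]
      have hei : ‖e i * s - s‖ < ε / (4 * (‖σ‖ + 1)) := by
        rw [dist_eq_norm] at hi; exact hi
      calc ‖σ (e i * s) - σ s‖ = ‖σ (e i * s - s)‖ := by rw [map_sub]
        _ ≤ ‖σ‖ * ‖e i * s - s‖ := σ.le_opNorm _
        _ ≤ (‖σ‖ + 1) * ‖e i * s - s‖ :=
            mul_le_mul_of_nonneg_right (le_add_of_nonneg_right zero_le_one)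
              (norm_nonneg _)
        _ < (‖σ‖ + 1) * (ε / (4 * (‖σ‖ + 1))) :=
            mul_lt_mul_of_pos_left hei (by positivity)
        _ = ε / 4 := by field_simp
    have e3 : ‖σ s - b‖ < ε / (4 * K) := by
      rw [dist_eq_norm] at hs
      rw [norm_sub_rev]; exact hs
    have hKeq : K * (ε / (4 * K)) = ε / 4 := by field_simp
    have hle : ε / (4 * K) ≤ ε / 4 := by
      rw [div_le_div_iff₀ (by positivity) (by norm_num : (0:ℝ) < 4)]
      nlinarith
    calc dist (σ (e i) * b) b
        ≤ dist (σ (e i) * b) (σ (e i) * σ s) + dist (σ (e i) * σ s) (σ s)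
            + dist (σ s) b := dist_triangle4 _ _ _ _
      _ = ‖σ (e i) * b - σ (e i) * σ s‖ + ‖σ (e i) * σ s - σ s‖ + ‖σ s - b‖ := by
          rw [dist_eq_norm, dist_eq_norm, dist_eq_norm]
      _ < ε := by
          have := e1; have := e2; have := e3
          linarith [hKeq ▸ e1]
  -- Claim C1
  have hC1 : ∀ (mu : A →L[ℂ] ℂ) (c x : A),
      ρ₀ ((mu.comp pr).comp (r x)) c
        = ρ₀ ((mu.comp ((ContinuousLinearMap.mul ℂ A).flip x)).comp pr) c := by
    intro mu c
    refine hkey _ _ ?_ ?_ ?_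
    · exact (ρ₀.continuous.comp
        (continuous_const.clm_comp r.continuous)).clm_apply continuous_const
    · exact (ρ₀.continuous.comp
        ((continuous_const.clm_comp
          (ContinuousLinearMap.mul ℂ A).flip.continuous).clm_comp
          continuous_const)).clm_apply continuous_const
    · intro d
      rw [h1 d (mu.comp pr) c, h3 mu,
        h3 (mu.comp ((ContinuousLinearMap.mul ℂ A).flip (σ d)))]
      simp [hσ]
  -- assemble
  refine ⟨ρ, ?_, ?_, ?_⟩
  · intro a lam b
    rw [hρ, hρ]
    exact congrArg Φcl (ContinuousLinearMap.ext (hA lam a b))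
  · intro a lam b
    refine hkey (fun a => ρ (lam.comp (l a)) b) (fun a => ρ lam (a * b)) ?_ ?_
      (fun s => ?_) a
    · exact (ρ.continuous.comp (continuous_const.clm_comp l.continuous)).clm_apply
        continuous_const
    · exact (ρ lam).continuous.comp (continuous_id.mul continuous_const)
    · show ρ (lam.comp (l (σ s))) b = ρ lam (σ s * b)
      rw [hρ, hρ]
      have eq1 : ρ₀ ((lam.comp (l (σ s))).comp (r b))
          = ρ₀ ((lam.comp (r b)).comp (l (σ s))) :=
        ContinuousLinearMap.ext (hB1 lam (σ s) b)
      have eq2 : ρ₀ (lam.comp (r (σ s * b)))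
          = ρ₀ ((lam.comp (r b)).comp (r (σ s))) :=
        (ContinuousLinearMap.ext (hA lam b (σ s))).symm
      rw [eq1, eq2, hL (lam.comp (r b)) s, hR (lam.comp (r b)) s]
  · intro mu
    refine ContinuousLinearMap.ext fun b => ?_
    rw [hρ]
    have eqc : ρ₀ ((mu.comp pr).comp (r b))
        = ρ₀ ((mu.comp ((ContinuousLinearMap.mul ℂ A).flip b)).comp pr) :=
      ContinuousLinearMap.ext fun c => hC1 mu c b
    rw [eqc, h3 (mu.comp ((ContinuousLinearMap.mul ℂ A).flip b)), hΦcl]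
    refine hΦeq _ _ ?_
    have h := (mu.continuous.tendsto b).comp ((hsb b).mono_left hUle)
    simpa [Function.comp_def] using h
end

section
/- Let A be a Banach algebra with a bounded approximate identity and σ : A → A a continuous algebra homomorphism. If A is σ-biflat, then A has a σ-virtual diagonal. -/
/-!
Statement 6: Let A be a Banach algebra with a bounded approximate identity
and σ : A → A a continuous algebra homomorphism. If A is σ-biflat, then A
has a σ-virtual diagonal.

The projective tensor product `A ⊗̂ A` is modelled abstractly as a Banach
space `E` with a continuous bilinear cross-norm map `tm` satisfying the
isometric universal property, the canonical `A`-bimodule actions `l`, `r`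
and the diagonal map `pr`.  A σ-virtual diagonal is `M ∈ E**` with
`σ(a)·M = M·σ(a)` and `π**(M)·σ(a) = σ(a)` (as elements of `A**`), where
`(a·Φ)(lam) = Φ(lam·a)`, `(Φ·a)(lam) = Φ(a·lam)` and the dual actions are
`(a·lam) = lam ∘ (r a)`, `(lam·a) = lam ∘ (l a)` on `E*`, and
`(a·mu) b = mu (b*a)` on `A*`.
-/

universe u

open Filter

theorem sigma_biflat_implies_sigma_virtual_diagonal
    -- A is a Banach algebra
    (A : Type u) [NonUnitalNormedRing A] [NormedSpace ℂ A]
    [IsScalarTower ℂ A A] [SMulCommClass ℂ A A] [CompleteSpace A]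
    -- σ is a continuous algebra homomorphism on A
    (σ : A →L[ℂ] A) (hσ : ∀ a b : A, σ (a * b) = σ a * σ b)
    -- A has a bounded approximate identity (a bounded net)
    (ι : Type u) [Preorder ι] [IsDirected ι (· ≤ ·)] [Nonempty ι]
    (e : ι → A) (Cb : ℝ) (hCb : ∀ i, ‖e i‖ ≤ Cb)
    (hbai : ∀ a : A, Tendsto (fun i => e i * a) atTop (nhds a) ∧
                     Tendsto (fun i => a * e i) atTop (nhds a))
    -- E is the projective tensor product A ⊗̂ A
    (E : Type u) [NormedAddCommGroup E] [NormedSpace ℂ E] [CompleteSpace E]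
    (tm : A →L[ℂ] A →L[ℂ] E)
    (htm_norm : ∀ a b : A, ‖tm a b‖ = ‖a‖ * ‖b‖)
    (htm_univ : ∀ (X : Type u) [NormedAddCommGroup X] [NormedSpace ℂ X]
      [CompleteSpace X] (f : A →L[ℂ] A →L[ℂ] X),
      ∃! g : E →L[ℂ] X, (∀ a b : A, g (tm a b) = f a b) ∧ ‖g‖ = ‖f‖)
    -- the A-bimodule actions on E
    (l r : A →L[ℂ] E →L[ℂ] E)
    (hl : ∀ a b c : A, l a (tm b c) = tm (a * b) c)
    (hr : ∀ a b c : A, r a (tm b c) = tm b (c * a))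
    -- the diagonal map π
    (pr : E →L[ℂ] A)
    (hpr : ∀ a b : A, pr (tm a b) = a * b)
    -- A is σ-biflat
    (hsbiflat : ∃ ρ : (E →L[ℂ] ℂ) →L[ℂ] (A →L[ℂ] ℂ),
      (∀ (a : A) (lam : E →L[ℂ] ℂ) (b : A),
        ρ (lam.comp (r (σ a))) b = ρ lam (b * a)) ∧
      (∀ (a : A) (lam : E →L[ℂ] ℂ) (b : A),
        ρ (lam.comp (l (σ a))) b = ρ lam (a * b)) ∧
      (∀ mu : A →L[ℂ] ℂ, ρ (mu.comp pr) = mu.comp σ)) :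
    -- Then A has a σ-virtual diagonal M ∈ E**
    ∃ M : (E →L[ℂ] ℂ) →L[ℂ] ℂ,
      (∀ (a : A) (lam : E →L[ℂ] ℂ),
        M (lam.comp (l (σ a))) = M (lam.comp (r (σ a)))) ∧
      (∀ (a : A) (mu : A →L[ℂ] ℂ),
        M ((mu.comp ((ContinuousLinearMap.mul ℂ A).flip (σ a))).comp pr)
          = mu (σ a)) := by
 
  obtain ⟨ρ, hρr, hρl, hρπ⟩ := hsbiflat
  haveI : (atTop : Filter ι).NeBot := atTop_neBot
  set U : Ultrafilter ι := Ultrafilter.of atTop with hUdef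
  have hUle : (U : Filter ι) ≤ atTop := Ultrafilter.of_le _
  -- every bounded ℂ-valued function has a limit along U
  have key : ∀ lam : E →L[ℂ] ℂ, ∃ x : ℂ,
      Tendsto (fun i => ρ lam (e i)) (U : Filter ι) (nhds x) := by
    intro lam
    have hb : ∀ i, ρ lam (e i) ∈ Metric.closedBall (0 : ℂ) (‖ρ lam‖ * Cb) := by
      intro i
      rw [Metric.mem_closedBall, dist_zero_right]
      calc ‖ρ lam (e i)‖ ≤ ‖ρ lam‖ * ‖e i‖ := (ρ lam).le_opNorm _
        _ ≤ ‖ρ lam‖ * Cb := mul_le_mul_of_nonneg_left (hCb i) (norm_nonneg _)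
    have hc : IsCompact (Metric.closedBall (0 : ℂ) (‖ρ lam‖ * Cb)) :=
      isCompact_closedBall _ _
    obtain ⟨x, -, hx⟩ := hc.ultrafilter_le_nhds
      (Ultrafilter.map (fun i => ρ lam (e i)) U)
      (by
        rw [Ultrafilter.coe_map, le_principal_iff, mem_map]
        exact Filter.univ_mem' hb)
    exact ⟨x, hx⟩
  classical
  let Mf : (E →L[ℂ] ℂ) → ℂ := fun lam => (key lam).choose
  have hMf : ∀ lam, Tendsto (fun i => ρ lam (e i)) (U : Filter ι) (nhds (Mf lam)) :=
    fun lam => (key lam).choose_spec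
  have hMadd : ∀ lam1 lam2, Mf (lam1 + lam2) = Mf lam1 + Mf lam2 := by
    intro lam1 lam2
    refine tendsto_nhds_unique (hMf (lam1 + lam2)) ?_
    have : Tendsto (fun i => ρ lam1 (e i) + ρ lam2 (e i)) (U : Filter ι)
        (nhds (Mf lam1 + Mf lam2)) := (hMf lam1).add (hMf lam2)
    convert this using 2 with i
    simp
  have hMsmul : ∀ (c : ℂ) lam, Mf (c • lam) = c • Mf lam := by
    intro c lam
    refine tendsto_nhds_unique (hMf (c • lam)) ?_
    have : Tendsto (fun i => c • ρ lam (e i)) (U : Filter ι)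
        (nhds (c • Mf lam)) := (hMf lam).const_smul c
    convert this using 2 with i
    simp
  have hCb0 : 0 ≤ Cb := le_trans (norm_nonneg _) (hCb (Classical.arbitrary ι))
  have hMbound : ∀ lam, ‖Mf lam‖ ≤ (‖ρ‖ * Cb) * ‖lam‖ := by
    intro lam
    have h1 : Tendsto (fun i => ‖ρ lam (e i)‖) (U : Filter ι) (nhds ‖Mf lam‖) :=
      (hMf lam).norm
    refine le_of_tendsto h1 (Filter.univ_mem' ?_)
    intro i
    calc ‖ρ lam (e i)‖ ≤ ‖ρ lam‖ * ‖e i‖ := (ρ lam).le_opNorm _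
      _ ≤ (‖ρ‖ * ‖lam‖) * Cb :=
          mul_le_mul (ρ.le_opNorm lam) (hCb i) (norm_nonneg _)
            (by positivity)
      _ = (‖ρ‖ * Cb) * ‖lam‖ := by ring
  let M : (E →L[ℂ] ℂ) →L[ℂ] ℂ :=
    LinearMap.mkContinuous
      { toFun := Mf
        map_add' := hMadd
        map_smul' := hMsmul } (‖ρ‖ * Cb) hMbound
  refine ⟨M, ?_, ?_⟩
  · intro a lam
    have h1 : Tendsto (fun i => ρ (lam.comp (l (σ a))) (e i)) (U : Filter ι)
        (nhds (ρ lam a)) := by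
      have : Tendsto (fun i => ρ lam (a * e i)) (U : Filter ι) (nhds (ρ lam a)) :=
        (((ρ lam).continuous.tendsto a).comp ((hbai a).2)).mono_left hUle
      convert this using 2 with i
      exact hρl a lam (e i)
    have h2 : Tendsto (fun i => ρ (lam.comp (r (σ a))) (e i)) (U : Filter ι)
        (nhds (ρ lam a)) := by
      have : Tendsto (fun i => ρ lam (e i * a)) (U : Filter ι) (nhds (ρ lam a)) :=
        (((ρ lam).continuous.tendsto a).comp ((hbai a).1)).mono_left hUle
      convert this using 2 with i
      exact hρr a lam (e i)
    have e1 : M (lam.comp (l (σ a))) = ρ lam a :=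
      tendsto_nhds_unique (hMf _) h1
    have e2 : M (lam.comp (r (σ a))) = ρ lam a :=
      tendsto_nhds_unique (hMf _) h2
    rw [e1, e2]
  · intro a mu
    have h1 : Tendsto
        (fun i => ρ ((mu.comp ((ContinuousLinearMap.mul ℂ A).flip (σ a))).comp pr) (e i))
        (U : Filter ι) (nhds (mu (σ a))) := by
      have h2 : Tendsto (fun i => mu (σ (e i * a))) (U : Filter ι)
          (nhds (mu (σ a))) :=
        ((mu.continuous.tendsto (σ a)).comp
          ((σ.continuous.tendsto a).comp ((hbai a).1))).mono_left hUle
      convert h2 using 2 with i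
      rw [hρπ]
      simp [hσ]
    exact tendsto_nhds_unique (hMf _) h1
end

section
/- Let A be a Banach algebra and σ : A → A a continuous algebra homomorphism. If A has a σ-virtual diagonal, then A is σ-biflat. -/
/-!
Statement 7: Let A be a Banach algebra and σ : A → A a continuous algebra
homomorphism. If A has a σ-virtual diagonal, then A is σ-biflat.

The projective tensor product `A ⊗̂ A` is modelled abstractly as a Banach
space `E` with a continuous bilinear cross-norm map `tm` satisfying the
isometric universal property, the canonical `A`-bimodule actions `l`, `r`
and the diagonal map `pr`.  A σ-virtual diagonal is `M ∈ E**` with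
`σ(a)·M = M·σ(a)` and `π**(M)·σ(a) = σ(a)` (as elements of `A**`).
-/

universe u

set_option maxHeartbeats 1000000
set_option synthInstance.maxHeartbeats 400000

private lemma opNorm_eq_of_norm_apply_eq {E F G : Type*} [NormedAddCommGroup E]
    [NormedSpace ℂ E] [NormedAddCommGroup F] [NormedSpace ℂ F]
    [NormedAddCommGroup G] [NormedSpace ℂ G]
    (f : E →L[ℂ] F) (g : E →L[ℂ] G) (h : ∀ x, ‖f x‖ = ‖g x‖) : ‖f‖ = ‖g‖ :=
  le_antisymm
    (f.opNorm_le_bound (norm_nonneg g) fun x => (h x).le.trans (g.le_opNorm x))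
    (g.opNorm_le_bound (norm_nonneg f) fun x => (h x).ge.trans (f.le_opNorm x))


theorem sigma_virtual_diagonal_implies_sigma_biflat
    -- A is a Banach algebra
    (A : Type u) [NonUnitalNormedRing A] [NormedSpace ℂ A]
    [IsScalarTower ℂ A A] [SMulCommClass ℂ A A] [CompleteSpace A]
    -- σ is a continuous algebra homomorphism on A
    (σ : A →L[ℂ] A) (hσ : ∀ a b : A, σ (a * b) = σ a * σ b)
    -- E is the projective tensor product A ⊗̂ A
    (E : Type u) [NormedAddCommGroup E] [NormedSpace ℂ E] [CompleteSpace E]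
    (tm : A →L[ℂ] A →L[ℂ] E)
    (htm_norm : ∀ a b : A, ‖tm a b‖ = ‖a‖ * ‖b‖)
    (htm_univ : ∀ (X : Type u) [NormedAddCommGroup X] [NormedSpace ℂ X]
      [CompleteSpace X] (f : A →L[ℂ] A →L[ℂ] X),
      ∃! g : E →L[ℂ] X, (∀ a b : A, g (tm a b) = f a b) ∧ ‖g‖ = ‖f‖)
    -- the A-bimodule actions on E
    (l r : A →L[ℂ] E →L[ℂ] E)
    (hl : ∀ a b c : A, l a (tm b c) = tm (a * b) c)
    (hr : ∀ a b c : A, r a (tm b c) = tm b (c * a))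
    -- the diagonal map π
    (pr : E →L[ℂ] A)
    (hpr : ∀ a b : A, pr (tm a b) = a * b)
    -- A has a σ-virtual diagonal M ∈ E**
    (hvd : ∃ M : (E →L[ℂ] ℂ) →L[ℂ] ℂ,
      (∀ (a : A) (lam : E →L[ℂ] ℂ),
        M (lam.comp (l (σ a))) = M (lam.comp (r (σ a)))) ∧
      (∀ (a : A) (mu : A →L[ℂ] ℂ),
        M ((mu.comp ((ContinuousLinearMap.mul ℂ A).flip (σ a))).comp pr)
          = mu (σ a))) :
    -- Then A is σ-biflat
    ∃ ρ : (E →L[ℂ] ℂ) →L[ℂ] (A →L[ℂ] ℂ),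
      (∀ (a : A) (lam : E →L[ℂ] ℂ) (b : A),
        ρ (lam.comp (r (σ a))) b = ρ lam (b * a)) ∧
      (∀ (a : A) (lam : E →L[ℂ] ℂ) (b : A),
        ρ (lam.comp (l (σ a))) b = ρ lam (a * b)) ∧
      (∀ mu : A →L[ℂ] ℂ, ρ (mu.comp pr) = mu.comp σ) := by
  classical
  obtain ⟨M, hM1, hM2⟩ := hvd
  by_cases hA : ∀ a : A, a = 0
  · refine ⟨0, by simp, by simp, ?_⟩
    intro mu
    ext b
    simp [hA (σ b)]
  · push_neg at hA
    obtain ⟨a₀, ha₀⟩ := hA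
    -- Step 1: every continuous functional vanishing on elementary tensors is 0.
    have key : ∀ lam : E →L[ℂ] ℂ, (∀ a b : A, lam (tm a b) = 0) → lam = 0 := by
      intro lam hlam
      by_contra hne
      obtain ⟨ν, hν1, hν2⟩ := exists_dual_vector ℂ a₀ (norm_ne_zero_iff.mpr ha₀)
      set B : A →L[ℂ] A →L[ℂ] ℂ := ν.smulRight ν with hB
      have hcast : (‖a₀‖ : ℂ) ≠ 0 := by
        exact_mod_cast norm_ne_zero_iff.mpr ha₀
      have hBa : B a₀ a₀ = (‖a₀‖ : ℂ) * ‖a₀‖ := by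
        simp [hB, hν2, smul_eq_mul]
      have hBne : B ≠ 0 := by
        intro h0
        rw [h0] at hBa
        simp at hBa
        exact ha₀ hBa
      have hBpos : (0:ℝ) < ‖B‖ := (norm_pos_iff (E := A →L[ℂ] A →L[ℂ] ℂ)).mpr hBne
      have hlampos : (0:ℝ) < ‖lam‖ := (norm_pos_iff (E := E →L[ℂ] ℂ)).mpr hne
      -- auxiliary spaces
      let X : Type u := ULift.{u} (ℂ × ℂ)
      let X0 : Type u := ULift.{u} ℂ
      let uL : (ℂ × ℂ) →L[ℂ] X :=
        ((LinearIsometryEquiv.ulift ℂ (ℂ × ℂ)).symm.toLinearIsometry).toContinuousLinearMap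
      let dn0 : X0 →L[ℂ] ℂ :=
        ((LinearIsometryEquiv.ulift ℂ ℂ).toLinearIsometry).toContinuousLinearMap
      let up0 : ℂ →L[ℂ] X0 :=
        ((LinearIsometryEquiv.ulift ℂ ℂ).symm.toLinearIsometry).toContinuousLinearMap
      let ψ₁ : ℂ →L[ℂ] X := uL.comp (ContinuousLinearMap.inl ℂ ℂ ℂ)
      let ψ₂ : ℂ →L[ℂ] X := uL.comp (ContinuousLinearMap.inr ℂ ℂ ℂ)
      let f : A →L[ℂ] A →L[ℂ] X := (ContinuousLinearMap.compL ℂ A ℂ X ψ₁).comp B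
      let f0 : A →L[ℂ] A →L[ℂ] X0 := (ContinuousLinearMap.compL ℂ A ℂ X0 up0).comp B
      have hfab : ∀ a b : A, f a b = ULift.up (B a b, 0) := fun a b => rfl
      have hf0ab : ∀ a b : A, f0 a b = ULift.up (B a b) := fun a b => rfl
      have hψ₁norm : ∀ c : ℂ, ‖ψ₁ c‖ = ‖c‖ := by
        intro c
        show ‖(ULift.up ((c, 0) : ℂ × ℂ) : X)‖ = ‖c‖
        rw [ULift.norm_up, Prod.norm_def, norm_zero]
        exact max_eq_left (norm_nonneg _)
      have hfB : ‖f‖ = ‖B‖ :=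
        opNorm_eq_of_norm_apply_eq _ _ (fun a =>
          opNorm_eq_of_norm_apply_eq _ _ (fun b => hψ₁norm (B a b)))
      have hf0B : ‖f0‖ = ‖B‖ :=
        opNorm_eq_of_norm_apply_eq _ _ (fun a =>
          opNorm_eq_of_norm_apply_eq _ _ (fun b => rfl))
      obtain ⟨g0, ⟨hg0tm, hg0n⟩, -⟩ := htm_univ X0 f0
      obtain ⟨g, hg, hguniq⟩ := htm_univ X f
      -- the two competing extensions
      let G₁ : E →L[ℂ] X := ψ₁.comp (dn0.comp g0)
      let L : E →L[ℂ] X := ψ₂.comp lam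
      let c : ℂ := ((‖B‖ / ‖lam‖ : ℝ) : ℂ)
      let G₂ : E →L[ℂ] X := G₁ + c • L
      have hcne : c ≠ 0 := by
        simp only [c, ne_eq, Complex.ofReal_eq_zero]
        positivity
      have hG1x : ∀ x : E, G₁ x = ULift.up (dn0 (g0 x), 0) := fun x => rfl
      have hG2x : ∀ x : E, G₂ x = ULift.up (dn0 (g0 x), c * lam x) := by
        intro x
        show ULift.up ((dn0 (g0 x), (0:ℂ))) + c • ULift.up (((0:ℂ), lam x)) = _
        have : ((dn0 (g0 x), (0:ℂ))) + c • (((0:ℂ), lam x)) = (dn0 (g0 x), c * lam x) := by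
          simp [Prod.ext_iff, smul_eq_mul]
        exact congrArg ULift.up this
      have hdn0 : ∀ z : ℂ, dn0 (ULift.up z) = z := fun z => rfl
      have hG1tm : ∀ a b : A, G₁ (tm a b) = f a b := by
        intro a b
        rw [hG1x, hfab, hg0tm, hf0ab]
        rfl
      have hG2tm : ∀ a b : A, G₂ (tm a b) = f a b := by
        intro a b
        rw [hG2x, hfab, hlam a b, mul_zero, hg0tm, hf0ab]
        rfl
      -- lower bound for the norm of any extension
      have lower : ∀ G : E →L[ℂ] X, (∀ a b : A, G (tm a b) = f a b) → ‖f‖ ≤ ‖G‖ := by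
        intro G hG
        refine ContinuousLinearMap.opNorm_le_bound _ (norm_nonneg G) fun a => ?_
        refine ContinuousLinearMap.opNorm_le_bound _
          (mul_nonneg (norm_nonneg G) (norm_nonneg a)) fun b => ?_
        rw [← hG a b, mul_assoc, ← htm_norm a b]
        exact G.le_opNorm (tm a b)
      have hG1n : ‖G₁‖ = ‖f‖ := by
        refine le_antisymm ?_ (lower G₁ hG1tm)
        refine ContinuousLinearMap.opNorm_le_bound _ (norm_nonneg f) fun x => ?_
        have h1 : ‖G₁ x‖ = ‖g0 x‖ := by
          rw [hG1x, ULift.norm_up, Prod.norm_def, norm_zero]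
          exact max_eq_left (norm_nonneg _)
        rw [h1, hfB, ← hf0B, ← hg0n]
        exact g0.le_opNorm x
      have hG2n : ‖G₂‖ = ‖f‖ := by
        refine le_antisymm ?_ (lower G₂ hG2tm)
        refine ContinuousLinearMap.opNorm_le_bound _ (norm_nonneg f) fun x => ?_
        have h1 : ‖G₂ x‖ = max ‖dn0 (g0 x)‖ ‖c * lam x‖ := by
          rw [hG2x, ULift.norm_up, Prod.norm_def]
        rw [h1]
        have hc1 : ‖dn0 (g0 x)‖ ≤ ‖f‖ * ‖x‖ := by
          have : ‖dn0 (g0 x)‖ = ‖g0 x‖ := rfl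
          rw [this, hfB, ← hf0B, ← hg0n]
          exact g0.le_opNorm x
        have hc2 : ‖c * lam x‖ ≤ ‖f‖ * ‖x‖ := by
          rw [norm_mul]
          have h3 : ‖c‖ = ‖B‖ / ‖lam‖ := by
            rw [show c = ((‖B‖ / ‖lam‖ : ℝ) : ℂ) from rfl, Complex.norm_real,
              Real.norm_eq_abs]
            exact abs_of_nonneg (by positivity)
          calc ‖c‖ * ‖lam x‖ ≤ ‖c‖ * (‖lam‖ * ‖x‖) := by
                have := lam.le_opNorm x
                have hcpos : (0:ℝ) ≤ ‖c‖ := norm_nonneg _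
                nlinarith [norm_nonneg (lam x)]
            _ = ‖B‖ * ‖x‖ := by
                rw [h3]
                field_simp
            _ = ‖f‖ * ‖x‖ := by rw [hfB]
        exact max_le hc1 hc2
      have e1 : G₁ = g := hguniq G₁ ⟨hG1tm, hG1n⟩
      have e2 : G₂ = g := hguniq G₂ ⟨hG2tm, hG2n⟩
      have he : c • L = 0 := by
        have h12 : G₁ + c • L = G₁ := by
          rw [show G₁ + c • L = G₂ from rfl, e2, e1]
        exact add_eq_left.mp h12
      have hL : L = 0 := (smul_eq_zero.mp he).resolve_left hcne
      apply hne
      ext x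
      have hx : L x = 0 := by rw [hL]; rfl
      have hx2 : ((0:ℂ), lam x) = ((0:ℂ), (0:ℂ)) := by
        have := congrArg ULift.down hx
        exact this
      simpa using congrArg Prod.snd hx2
    -- Step 2: functionals agreeing on elementary tensors are equal.
    have ext2 : ∀ l1 l2 : E →L[ℂ] ℂ, (∀ a b : A, l1 (tm a b) = l2 (tm a b)) → l1 = l2 := by
      intro l1 l2 h
      have := key (l1 - l2) (fun a b => by
        simp [ContinuousLinearMap.sub_apply, h a b])
      exact sub_eq_zero.mp this
    -- Step 3: the splitting map ρ
    let T : A →L[ℂ] (E →L[ℂ] ℂ) →L[ℂ] ℂ :=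
      ((ContinuousLinearMap.compL ℂ (E →L[ℂ] ℂ) (E →L[ℂ] ℂ) ℂ M).comp
        (((ContinuousLinearMap.compL ℂ E E ℂ).flip).comp (r.comp σ)))
    have hT : ∀ (lam : E →L[ℂ] ℂ) (b : A), T.flip lam b = M (lam.comp (r (σ b))) :=
      fun lam b => rfl
    refine ⟨T.flip, ?_, ?_, ?_⟩
    · intro a lam b
      rw [hT, hT]
      refine congrArg M (ext2 _ _ fun x y => ?_)
      simp [ContinuousLinearMap.comp_apply, hr, hσ, mul_assoc]
    · intro a lam b
      rw [hT, hT]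
      have h1 : (lam.comp (l (σ a))).comp (r (σ b)) = (lam.comp (r (σ b))).comp (l (σ a)) := by
        refine ext2 _ _ fun x y => ?_
        simp [ContinuousLinearMap.comp_apply, hr, hl]
      rw [h1, hM1 a (lam.comp (r (σ b)))]
      refine congrArg M (ext2 _ _ fun x y => ?_)
      simp [ContinuousLinearMap.comp_apply, hr, hσ, mul_assoc]
    · intro mu
      ext b
      rw [ContinuousLinearMap.comp_apply, hT, ← hM2 b mu]
      refine congrArg M (ext2 _ _ fun x y => ?_)
      simp [ContinuousLinearMap.comp_apply, hr, hpr, mul_assoc,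
        ContinuousLinearMap.flip_apply, ContinuousLinearMap.mul_apply']
end

section
/- Let A be a Banach algebra and σ : A → A a continuous algebra homomorphism. If A has a σ-approximate diagonal, then A has a σ-virtual diagonal; in particular, A has a σ-virtual diagonal if and only if A has a σ-approximate diagonal. -/
/-!
Statement 8: Let A be a Banach algebra and σ : A → A a continuous algebra
homomorphism. If A has a σ-approximate diagonal, then A has a σ-virtual
diagonal; in particular, A has a σ-virtual diagonal if and only if A has a
σ-approximate diagonal.

The projective tensor product `A ⊗̂ A` is modelled abstractly as a Banach
space `E` with a continuous bilinear cross-norm map `tm` satisfying the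
isometric universal property, the canonical `A`-bimodule actions `l`, `r`
and the diagonal map `pr`.  A σ-virtual diagonal is `M ∈ E**` with
`σ(a)·M = M·σ(a)` and `π**(M)·σ(a) = σ(a)`; a σ-approximate diagonal is a
bounded net `(m i)` in `E` with `m i·σ(a) − σ(a)·m i → 0` and
`π(m i)·σ(a) → σ(a)` in norm.
-/

universe u

open Filter

/-- `A` has a σ-virtual diagonal (w.r.t. the model `E` of `A ⊗̂ A`). -/
def HasSigmaVirtualDiagonal
    (A : Type u) [NonUnitalNormedRing A] [NormedSpace ℂ A]
    [IsScalarTower ℂ A A] [SMulCommClass ℂ A A]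
    (σ : A →L[ℂ] A)
    (E : Type u) [NormedAddCommGroup E] [NormedSpace ℂ E]
    (l r : A →L[ℂ] E →L[ℂ] E) (pr : E →L[ℂ] A) : Prop :=
  ∃ M : (E →L[ℂ] ℂ) →L[ℂ] ℂ,
    (∀ (a : A) (lam : E →L[ℂ] ℂ),
      M (lam.comp (l (σ a))) = M (lam.comp (r (σ a)))) ∧
    (∀ (a : A) (mu : A →L[ℂ] ℂ),
      M ((mu.comp ((ContinuousLinearMap.mul ℂ A).flip (σ a))).comp pr)
        = mu (σ a))

/-- `A` has a σ-approximate diagonal (w.r.t. the model `E` of `A ⊗̂ A`). -/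
def HasSigmaApproximateDiagonal
    (A : Type u) [NonUnitalNormedRing A] [NormedSpace ℂ A]
    [IsScalarTower ℂ A A] [SMulCommClass ℂ A A]
    (σ : A →L[ℂ] A)
    (E : Type u) [NormedAddCommGroup E] [NormedSpace ℂ E]
    (l r : A →L[ℂ] E →L[ℂ] E) (pr : E →L[ℂ] A) : Prop :=
  ∃ (ι : Type u) (pι : Preorder ι),
    Nonempty ι ∧ IsDirected ι (fun i j => pι.le i j) ∧
    ∃ (m : ι → E) (C : ℝ),
      (∀ i, ‖m i‖ ≤ C) ∧
      ∀ a : A,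
        Tendsto (fun i => r (σ a) (m i) - l (σ a) (m i))
          (@Filter.atTop ι pι) (nhds 0) ∧
        Tendsto (fun i => pr (m i) * σ a) (@Filter.atTop ι pι) (nhds (σ a))


set_option maxHeartbeats 1000000

section Aux
open ContinuousLinearMap in

lemma vd_key
    (A : Type u) [NonUnitalNormedRing A] [NormedSpace ℂ A]
    [IsScalarTower ℂ A A] [SMulCommClass ℂ A A]
    (σ : A →L[ℂ] A)
    (E : Type u) [NormedAddCommGroup E] [NormedSpace ℂ E]
    (l r : A →L[ℂ] E →L[ℂ] E) (pr : E →L[ℂ] A)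
    (M : (E →L[ℂ] ℂ) →L[ℂ] ℂ)
    (hM1 : ∀ (a : A) (lam : E →L[ℂ] ℂ),
      M (lam.comp (l (σ a))) = M (lam.comp (r (σ a))))
    (hM2 : ∀ (a : A) (mu : A →L[ℂ] ℂ),
      M ((mu.comp ((ContinuousLinearMap.mul ℂ A).flip (σ a))).comp pr) = mu (σ a))
    (F : Finset A) (ε : ℝ) (hε : 0 < ε) :
    ∃ m : E, ‖m‖ ≤ ‖M‖ + 1 ∧ ∀ a ∈ F,
      ‖r (σ a) m - l (σ a) m‖ < ε ∧ ‖pr m * σ a - σ a‖ < ε := by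
  classical
  by_contra hcon
  push_neg at hcon
  set C : ℝ := ‖M‖ + 1 with hCdef
  have hC0 : (0:ℝ) < C := by positivity
  -- the linear part of the affine map into the product space
  set Φ : E →L[ℂ] (↥F → E × A) :=
    ContinuousLinearMap.pi (fun a => ((r (σ a.1) - l (σ a.1)).prod
      (((ContinuousLinearMap.mul ℂ A).flip (σ a.1)).comp pr))) with hΦ
  set x0 : ↥F → E × A := fun a => (0, -σ a.1) with hx0
  have hΦapp : ∀ (m : E) (a : ↥F),
      (Φ m + x0) a = (r (σ a.1) m - l (σ a.1) m, pr m * σ a.1 - σ a.1) := by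
    intro m a
    simp only [hΦ, hx0, Pi.add_apply, ContinuousLinearMap.pi_apply,
      ContinuousLinearMap.prod_apply, ContinuousLinearMap.sub_apply,
      ContinuousLinearMap.comp_apply, ContinuousLinearMap.flip_apply,
      ContinuousLinearMap.mul_apply', Prod.mk_add_mk, add_zero, sub_eq_add_neg,
      ContinuousLinearMap.add_apply, ContinuousLinearMap.neg_apply]
  set S : Set (↥F → E × A) := (fun m => Φ m + x0) '' Metric.closedBall (0:E) C with hS
  -- 0 is not in the closure of S
  have hSnorm : ∀ x ∈ S, ε ≤ ‖x‖ := by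
    rintro x ⟨m, hm, rfl⟩
    rw [Metric.mem_closedBall, dist_zero_right] at hm
    obtain ⟨a, haF, hna⟩ := hcon m hm
    have h1 : ‖(Φ m + x0) ⟨a, haF⟩‖ ≤ ‖Φ m + x0‖ := norm_le_pi_norm _ _
    rw [hΦapp] at h1
    have h2 : ‖((r (σ a) m - l (σ a) m, pr m * σ a - σ a) : E × A)‖ ≤ ‖Φ m + x0‖ := h1
    rcases le_or_gt ε ‖r (σ a) m - l (σ a) m‖ with hna2 | hna2
    · exact le_trans (le_trans hna2 (norm_fst_le ((r (σ a) m - l (σ a) m, pr m * σ a - σ a) : E × A))) h2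
    · exact le_trans (le_trans (hna hna2) (norm_snd_le ((r (σ a) m - l (σ a) m, pr m * σ a - σ a) : E × A))) h2
  have h0S : (0 : ↥F → E × A) ∉ closure S := by
    intro h0
    have hcl : closure S ⊆ {x | ε ≤ ‖x‖} := by
      refine closure_minimal hSnorm ?_
      exact isClosed_le continuous_const continuous_norm
    have := hcl h0
    simp only [Set.mem_setOf_eq, norm_zero] at this
    linarith
  -- S is convex
  have hSconv : Convex ℝ S := by
    rintro x ⟨m1, hm1, rfl⟩ y ⟨m2, hm2, rfl⟩ s t hs ht hst
    refine ⟨s • m1 + t • m2, convex_closedBall (0:E) C hm1 hm2 hs ht hst, ?_⟩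
    show Φ (s • m1 + t • m2) + x0 = s • (Φ m1 + x0) + t • (Φ m2 + x0)
    rw [map_add, Φ.map_smul_of_tower, Φ.map_smul_of_tower]
    rw [smul_add, smul_add]
    have : s • x0 + t • x0 = x0 := by rw [← add_smul, hst, one_smul]
    rw [add_add_add_comm, this]
  -- separation
  obtain ⟨f, u, hu0, hf⟩ :=
    geometric_hahn_banach_point_closed (hSconv.closure) isClosed_closure h0S
  rw [map_zero] at hu0
  have hfS : ∀ m : E, ‖m‖ ≤ C → u < f (Φ m + x0) := by
    intro m hm
    exact hf _ (subset_closure ⟨m, by rwa [Metric.mem_closedBall, dist_zero_right], rfl⟩)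
  -- component functionals
  set sngl : (a : ↥F) → (E × A) →L[ℝ] (↥F → E × A) := fun a =>
    { toLinearMap := LinearMap.single ℝ (fun _ : ↥F => E × A) a
      cont := by exact continuous_single (A := fun _ : ↥F => E × A) a } with hsngl
  set e : ↥F → (E →L[ℝ] ℝ) := fun a =>
    f.comp ((sngl a).comp (ContinuousLinearMap.inl ℝ E A)) with he
  set g : ↥F → (A →L[ℝ] ℝ) := fun a =>
    f.comp ((sngl a).comp (ContinuousLinearMap.inr ℝ E A)) with hg
  have heapp : ∀ (a : ↥F) (x : E), e a x = f (Pi.single a (x, 0)) := fun a x => rfl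
  have hgapp : ∀ (a : ↥F) (y : A), g a y = f (Pi.single a (0, y)) := fun a y => rfl
  -- decomposition of f
  have hdec : ∀ v : ↥F → E × A, f v = ∑ a : ↥F, (e a (v a).1 + g a (v a).2) := by
    intro v
    conv_lhs => rw [← Finset.univ_sum_single v, map_sum]
    refine Finset.sum_congr rfl fun a _ => ?_
    have hva : ((v a).1, (0:A)) + ((0:E), (v a).2) = v a := by
      rw [Prod.mk_add_mk, add_zero, zero_add]
    conv_lhs => rw [← hva]
    rw [Pi.single_add, map_add, heapp, hgapp]
  -- the complex functional
  set fΦ : E →L[ℝ] ℝ := f.comp (Φ.restrictScalars ℝ) with hfΦ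
  set Λ : E →L[ℂ] ℂ := fΦ.extendTo𝕜' with hΛdef
  have hΦm : ∀ (m : E) (a : ↥F), Φ m a = (r (σ a.1) m - l (σ a.1) m, pr m * σ a.1) := by
    intro m a
    simp only [hΦ, ContinuousLinearMap.pi_apply, ContinuousLinearMap.prod_apply,
      ContinuousLinearMap.sub_apply, ContinuousLinearMap.comp_apply,
      ContinuousLinearMap.flip_apply, ContinuousLinearMap.mul_apply']
  have hrefl : ∀ m : E, fΦ m = f (Φ m) := fun m => rfl
  have hre : ∀ m : E, (Λ m).re = f (Φ m) := by
    intro m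
    have h1 : Λ m = (fΦ m : ℂ) - Complex.I * (fΦ (Complex.I • m) : ℂ) := by
      rw [hΛdef]; unfold ContinuousLinearMap.extendTo𝕜'; rw [ContinuousLinearMap.extendTo𝕜'_apply]; norm_num
    rw [h1, ← hrefl m]
    simp
  have hgre : ∀ a : ↥F, (((g a).extendTo𝕜' : A →L[ℂ] ℂ) (σ a.1)).re = g a (σ a.1) := by
    intro a
    have h1 : ((g a).extendTo𝕜' : A →L[ℂ] ℂ) (σ a.1)
        = (g a (σ a.1) : ℂ) - Complex.I * (g a (Complex.I • (σ a.1)) : ℂ) := by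
      unfold ContinuousLinearMap.extendTo𝕜'; rw [ContinuousLinearMap.extendTo𝕜'_apply]; norm_num
    rw [h1]
    simp
  -- Λ as a sum of elementary functionals
  have hΛeq : Λ = ∑ a : ↥F,
      (((e a).extendTo𝕜').comp (r (σ a.1) - l (σ a.1)) +
       ((((g a).extendTo𝕜').comp ((ContinuousLinearMap.mul ℂ A).flip (σ a.1))).comp pr)) := by
    ext m
    rw [ContinuousLinearMap.sum_apply]
    have hlhs : Λ m = (fΦ m : ℂ) - Complex.I * (fΦ (Complex.I • m) : ℂ) := by
      rw [hΛdef]; unfold ContinuousLinearMap.extendTo𝕜'; rw [ContinuousLinearMap.extendTo𝕜'_apply]; norm_num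
    have h1 : fΦ m = ∑ a : ↥F, (e a (r (σ a.1) m - l (σ a.1) m) + g a (pr m * σ a.1)) := by
      have : fΦ m = f (Φ m) := rfl
      rw [this, hdec]
      refine Finset.sum_congr rfl fun a _ => ?_
      rw [hΦm]
    have h2 : fΦ (Complex.I • m) = ∑ a : ↥F,
        (e a (Complex.I • (r (σ a.1) m - l (σ a.1) m)) + g a (Complex.I • (pr m * σ a.1))) := by
      have : fΦ (Complex.I • m) = f (Φ (Complex.I • m)) := rfl
      rw [this, hdec]
      refine Finset.sum_congr rfl fun a _ => ?_
      rw [map_smul, Pi.smul_apply, hΦm]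
      rfl
    have hterm : ∀ a : ↥F,
        ((((e a).extendTo𝕜' : E →L[ℂ] ℂ).comp (r (σ a.1) - l (σ a.1)) +
          ((((g a).extendTo𝕜' : A →L[ℂ] ℂ).comp
            ((ContinuousLinearMap.mul ℂ A).flip (σ a.1))).comp pr)) m)
        = ((e a (r (σ a.1) m - l (σ a.1) m) : ℂ)
            - Complex.I * (e a (Complex.I • (r (σ a.1) m - l (σ a.1) m)) : ℂ))
          + ((g a (pr m * σ a.1) : ℂ)
            - Complex.I * (g a (Complex.I • (pr m * σ a.1)) : ℂ)) := by
      intro a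
      unfold ContinuousLinearMap.extendTo𝕜'
      rw [ContinuousLinearMap.add_apply, ContinuousLinearMap.comp_apply,
        ContinuousLinearMap.comp_apply, ContinuousLinearMap.comp_apply,
        ContinuousLinearMap.extendTo𝕜'_apply, ContinuousLinearMap.extendTo𝕜'_apply,
        ContinuousLinearMap.sub_apply, ContinuousLinearMap.flip_apply,
        ContinuousLinearMap.mul_apply']
      norm_num
    have hRHS : (∑ a : ↥F,
        ((((e a).extendTo𝕜' : E →L[ℂ] ℂ).comp (r (σ a.1) - l (σ a.1)) +
          ((((g a).extendTo𝕜' : A →L[ℂ] ℂ).comp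
            ((ContinuousLinearMap.mul ℂ A).flip (σ a.1))).comp pr)) m))
        = ∑ a : ↥F,
          (((e a (r (σ a.1) m - l (σ a.1) m) : ℂ)
            - Complex.I * (e a (Complex.I • (r (σ a.1) m - l (σ a.1) m)) : ℂ))
          + ((g a (pr m * σ a.1) : ℂ)
            - Complex.I * (g a (Complex.I • (pr m * σ a.1)) : ℂ))) :=
      Finset.sum_congr rfl fun a _ => hterm a
    rw [hRHS, hlhs, h1, h2]
    push_cast
    rw [Finset.mul_sum, ← Finset.sum_sub_distrib]
    refine Finset.sum_congr rfl fun a _ => ?_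
    push_cast
    ring
  -- value of M at Λ
  have hMΛ : M Λ = ∑ a : ↥F, ((g a).extendTo𝕜' : A →L[ℂ] ℂ) (σ a.1) := by
    rw [hΛeq, map_sum]
    refine Finset.sum_congr rfl fun a _ => ?_
    rw [map_add, ContinuousLinearMap.comp_sub, map_sub, hM1 a.1, sub_self, zero_add, hM2]
  -- value of f at x0
  have hfx0 : f x0 = -(M Λ).re := by
    rw [hdec x0, hMΛ, Complex.re_sum, ← Finset.sum_neg_distrib]
    refine Finset.sum_congr rfl fun a _ => ?_
    rw [hgre]
    have h1 : (x0 a).1 = 0 := rfl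
    have h2 : (x0 a).2 = -σ a.1 := rfl
    rw [h1, h2, map_zero, map_neg, zero_add]
  -- the main strict inequality on the ball
  set v : ℝ := u + (M Λ).re with hv
  have hmain : ∀ m : E, ‖m‖ ≤ C → v < (Λ m).re := by
    intro m hm
    have h3 := hfS m hm
    rw [map_add, hfx0] at h3
    rw [hre]
    rw [hv]
    linarith
  have hv0 : v < 0 := by
    have h4 := hmain 0 (by simp [hC0.le])
    rw [map_zero] at h4
    simpa using h4
  -- norm bound on Λ over the ball
  have habs : ∀ m : E, ‖m‖ ≤ C → ‖Λ m‖ < -v := by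
    intro m hm
    by_cases hz : Λ m = 0
    · rw [hz, norm_zero]; linarith
    · have hzn : (0:ℝ) < ‖Λ m‖ := norm_pos_iff.2 hz
      set c : ℂ := -(starRingEnd ℂ (Λ m)) / (‖Λ m‖ : ℂ) with hc
      have hcnorm : ‖c‖ = 1 := by
        rw [hc, norm_div, norm_neg, RCLike.norm_conj]
        simp [Complex.norm_real, abs_of_pos hzn]
        exact hz
      have h5 : ‖c • m‖ ≤ C := by rw [norm_smul, hcnorm, one_mul]; exact hm
      have h6 := hmain (c • m) h5
      rw [map_smul] at h6
      have hcz : c • Λ m = -(‖Λ m‖ : ℂ) := by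
        rw [hc, smul_eq_mul, div_mul_eq_mul_div, neg_mul, mul_comm, ← neg_mul, neg_mul,
          Complex.mul_conj]
        rw [Complex.normSq_eq_norm_sq]
        push_cast
        rw [neg_div]
        congr 1
        rw [pow_two, mul_div_assoc, div_self (by exact_mod_cast ne_of_gt hzn), mul_one]
      rw [hcz] at h6
      simp only [Complex.neg_re, Complex.ofReal_re] at h6
      linarith
  -- operator norm bound
  have hΛnorm : ‖Λ‖ ≤ (-v) / C := by
    refine Λ.opNorm_le_bound (div_nonneg (by linarith) hC0.le) fun x => ?_
    by_cases hx : x = 0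
    · simp [hx]
    · have hxn : (0:ℝ) < ‖x‖ := norm_pos_iff.2 hx
      have h7 : ‖(C / ‖x‖ : ℝ) • x‖ ≤ C := by
        rw [norm_smul, Real.norm_eq_abs, abs_of_pos (div_pos hC0 hxn), div_mul_cancel₀ _ (ne_of_gt hxn)]
      have h8 := habs _ h7
      rw [Λ.map_smul_of_tower, norm_smul, Real.norm_eq_abs, abs_of_pos (div_pos hC0 hxn)] at h8
      rw [div_mul_eq_mul_div, le_div_iff₀ hC0]
      have h9 : C / ‖x‖ * ‖Λ x‖ * ‖x‖ < (-v) * ‖x‖ := mul_lt_mul_of_pos_right h8 hxn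
      have h10 : C / ‖x‖ * ‖Λ x‖ * ‖x‖ = ‖Λ x‖ * C := by
        field_simp
      rw [h10] at h9
      nlinarith
  -- the contradiction
  have hMle : ‖M Λ‖ ≤ ‖M‖ * ((-v) / C) :=
    le_trans (M.le_opNorm Λ) (by gcongr)
  have hre_ge : -(M Λ).re ≤ ‖M Λ‖ := by
    have h11 := Complex.abs_re_le_norm (M Λ)
    cases abs_cases ((M Λ).re) with
    | inl h => linarith [h.1]
    | inr h => linarith [h.1]
  have h12 : u - v = -(M Λ).re := by rw [hv]; ring
  have hτ : ‖Λ‖ * C ≤ -v := by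
    rw [← le_div_iff₀ hC0]
    exact hΛnorm
  have h13' : u - v ≤ (C - 1) * ‖Λ‖ := by
    have h16 : ‖M‖ = C - 1 := by rw [hCdef]; ring
    calc u - v = -(M Λ).re := h12
      _ ≤ ‖M Λ‖ := hre_ge
      _ ≤ ‖M‖ * ‖Λ‖ := M.le_opNorm Λ
      _ = (C - 1) * ‖Λ‖ := by rw [h16]
  linarith [norm_nonneg Λ, hu0, hv0]


lemma ad_to_vd
    (A : Type u) [NonUnitalNormedRing A] [NormedSpace ℂ A]
    [IsScalarTower ℂ A A] [SMulCommClass ℂ A A]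
    (σ : A →L[ℂ] A)
    (E : Type u) [NormedAddCommGroup E] [NormedSpace ℂ E]
    (l r : A →L[ℂ] E →L[ℂ] E) (pr : E →L[ℂ] A)
    (ι : Type u) (pι : Preorder ι) (hne : Nonempty ι)
    (hdir : IsDirected ι (fun i j => pι.le i j))
    (m : ι → E) (C : ℝ) (hC : ∀ i, ‖m i‖ ≤ C)
    (h : ∀ a : A,
        Tendsto (fun i => r (σ a) (m i) - l (σ a) (m i))
          (@Filter.atTop ι pι) (nhds 0) ∧
        Tendsto (fun i => pr (m i) * σ a) (@Filter.atTop ι pι) (nhds (σ a))) :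
    ∃ M : (E →L[ℂ] ℂ) →L[ℂ] ℂ,
    (∀ (a : A) (lam : E →L[ℂ] ℂ),
      M (lam.comp (l (σ a))) = M (lam.comp (r (σ a)))) ∧
    (∀ (a : A) (mu : A →L[ℂ] ℂ),
      M ((mu.comp ((ContinuousLinearMap.mul ℂ A).flip (σ a))).comp pr)
        = mu (σ a)) := by
  letI := pι
  haveI : IsDirected ι (· ≤ ·) := hdir
  haveI : Nonempty ι := hne
  haveI : (atTop : Filter ι).NeBot := atTop_neBot
  set 𝒰 : Ultrafilter ι := Ultrafilter.of atTop with h𝒰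
  have h𝒰le : (𝒰 : Filter ι) ≤ atTop := Ultrafilter.of_le _
  have hC0 : 0 ≤ C := le_trans (norm_nonneg _) (hC hne.some)
  -- existence of ultrafilter limits
  have hex : ∀ lam : E →L[ℂ] ℂ, ∃ z : ℂ, Tendsto (fun i => lam (m i)) (𝒰 : Filter ι) (nhds z) := by
    intro lam
    have hmem : Metric.closedBall (0 : ℂ) (‖lam‖ * C) ∈ Ultrafilter.map (fun i => lam (m i)) 𝒰 := by
      refine Filter.mem_map.2 (Filter.univ_mem' fun i => ?_)
      refine Metric.mem_closedBall.2 ?_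
      rw [dist_zero_right]
      calc ‖lam (m i)‖ ≤ ‖lam‖ * ‖m i‖ := lam.le_opNorm _
        _ ≤ ‖lam‖ * C := by gcongr; exact hC i
    obtain ⟨z, _, hz⟩ := (isCompact_closedBall (0 : ℂ) (‖lam‖ * C)).ultrafilter_le_nhds
      (Ultrafilter.map (fun i => lam (m i)) 𝒰) (le_principal_iff.2 hmem)
    exact ⟨z, hz⟩
  choose φ hφ using hex
  have hadd : ∀ f g : E →L[ℂ] ℂ, φ (f + g) = φ f + φ g := by
    intro f g
    refine tendsto_nhds_unique (hφ (f + g)) ?_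
    simpa using (hφ f).add (hφ g)
  have hsmul : ∀ (c : ℂ) (f : E →L[ℂ] ℂ), φ (c • f) = c • φ f := by
    intro c f
    refine tendsto_nhds_unique (hφ (c • f)) ?_
    simpa using (hφ f).const_mul c
  have hbound : ∀ f : E →L[ℂ] ℂ, ‖φ f‖ ≤ C * ‖f‖ := by
    intro f
    have := (hφ f).norm
    refine le_of_tendsto this (Filter.univ_mem' fun i => ?_)
    calc ‖f (m i)‖ ≤ ‖f‖ * ‖m i‖ := f.le_opNorm _
      _ ≤ ‖f‖ * C := by gcongr; exact hC i
      _ = C * ‖f‖ := mul_comm _ _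
  set M : (E →L[ℂ] ℂ) →L[ℂ] ℂ :=
    LinearMap.mkContinuous { toFun := φ, map_add' := hadd, map_smul' := hsmul } C hbound with hM
  have hMapp : ∀ f, M f = φ f := fun f => rfl
  refine ⟨M, fun a lam => ?_, fun a mu => ?_⟩
  · rw [hMapp, hMapp]
    have h1 : Tendsto (fun i => lam (r (σ a) (m i)) - lam (l (σ a) (m i))) (𝒰 : Filter ι) (nhds 0) := by
      have h0 := ((h a).1.mono_left h𝒰le)
      have h0' := (lam.continuous.tendsto 0).comp h0
      have heq : (⇑lam ∘ fun i => r (σ a) (m i) - l (σ a) (m i))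
          = fun i => lam (r (σ a) (m i)) - lam (l (σ a) (m i)) := by
        funext i; simp [Function.comp, map_sub]
      rw [heq, map_zero] at h0'
      exact h0'
    have h2 : Tendsto (fun i => lam (r (σ a) (m i)) - lam (l (σ a) (m i))) (𝒰 : Filter ι)
        (nhds (φ (lam.comp (r (σ a))) - φ (lam.comp (l (σ a))))) :=
      (hφ (lam.comp (r (σ a)))).sub (hφ (lam.comp (l (σ a))))
    have := tendsto_nhds_unique h2 h1
    linear_combination -this
  · rw [hMapp]
    refine tendsto_nhds_unique (hφ _) ?_
    have h0 := ((h a).2.mono_left h𝒰le)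
    have h0' := (mu.continuous.tendsto (σ a)).comp h0
    have heq : (⇑mu ∘ fun i => pr (m i) * σ a)
        = fun i => ((mu.comp ((ContinuousLinearMap.mul ℂ A).flip (σ a))).comp pr) (m i) := by
      funext i; simp [Function.comp]
    rw [heq] at h0'
    exact h0'


lemma vd_to_ad
    (A : Type u) [NonUnitalNormedRing A] [NormedSpace ℂ A]
    [IsScalarTower ℂ A A] [SMulCommClass ℂ A A]
    (σ : A →L[ℂ] A)
    (E : Type u) [NormedAddCommGroup E] [NormedSpace ℂ E]
    (l r : A →L[ℂ] E →L[ℂ] E) (pr : E →L[ℂ] A) (C : ℝ)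
    (key : ∀ (F : Finset A) (ε : ℝ), 0 < ε →
      ∃ m : E, ‖m‖ ≤ C ∧ ∀ a ∈ F,
        ‖r (σ a) m - l (σ a) m‖ < ε ∧ ‖pr m * σ a - σ a‖ < ε) :
    ∃ (ι : Type u) (pι : Preorder ι),
    Nonempty ι ∧ IsDirected ι (fun i j => pι.le i j) ∧
    ∃ (m : ι → E) (C' : ℝ),
      (∀ i, ‖m i‖ ≤ C') ∧
      ∀ a : A,
        Tendsto (fun i => r (σ a) (m i) - l (σ a) (m i))
          (@Filter.atTop ι pι) (nhds 0) ∧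
        Tendsto (fun i => pr (m i) * σ a) (@Filter.atTop ι pι) (nhds (σ a)) := by
  classical
  set ι : Type u := Finset A × ULift.{u} ℕ with hι
  letI pι : Preorder ι :=
    { le := fun p q => p.1 ⊆ q.1 ∧ p.2.down ≤ q.2.down
      le_refl := fun p => ⟨subset_rfl, le_rfl⟩
      le_trans := fun p q s h1 h2 => ⟨h1.1.trans h2.1, h1.2.trans h2.2⟩ }
  haveI hdir : IsDirected ι (fun i j => pι.le i j) := by
    constructor
    rintro ⟨F1, n1⟩ ⟨F2, n2⟩
    exact ⟨⟨F1 ∪ F2, ULift.up (max n1.down n2.down)⟩,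
      ⟨Finset.subset_union_left, le_max_left _ _⟩,
      ⟨Finset.subset_union_right, le_max_right _ _⟩⟩
  haveI hne : Nonempty ι := ⟨⟨∅, ULift.up 0⟩⟩
  have hkey : ∀ i : ι, ∃ m : E, ‖m‖ ≤ C ∧ ∀ a ∈ i.1,
      ‖r (σ a) m - l (σ a) m‖ < 1 / (i.2.down + 1) ∧
      ‖pr m * σ a - σ a‖ < 1 / (i.2.down + 1) := by
    intro i
    exact key i.1 (1 / (i.2.down + 1)) (by positivity)
  choose m hmC hm using hkey
  refine ⟨ι, pι, hne, hdir, m, C, hmC, fun a => ?_⟩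
  have hbig : ∀ (ε : ℝ), 0 < ε → ∃ i0 : ι, ∀ i, pι.le i0 i →
      ‖r (σ a) (m i) - l (σ a) (m i)‖ < ε ∧ ‖pr (m i) * σ a - σ a‖ < ε := by
    intro ε hε
    obtain ⟨n, hn⟩ := exists_nat_one_div_lt hε
    refine ⟨⟨{a}, ULift.up n⟩, fun i hi => ?_⟩
    have ha : a ∈ i.1 := hi.1 (Finset.mem_singleton_self a)
    have hlt : (1 : ℝ) / (i.2.down + 1) ≤ 1 / (n + 1) := by
      apply one_div_le_one_div_of_le (by positivity)
      have : (n : ℝ) ≤ i.2.down := by exact_mod_cast hi.2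
      linarith
    obtain ⟨h1, h2⟩ := hm i a ha
    exact ⟨lt_of_lt_of_le h1 (hlt.trans hn.le), lt_of_lt_of_le h2 (hlt.trans hn.le)⟩
  constructor
  · rw [Metric.tendsto_nhds]
    intro ε hε
    obtain ⟨i0, hi0⟩ := hbig ε hε
    rw [eventually_atTop]
    exact ⟨i0, fun i hi => by rw [dist_zero_right]; exact (hi0 i hi).1⟩
  · rw [Metric.tendsto_nhds]
    intro ε hε
    obtain ⟨i0, hi0⟩ := hbig ε hε
    rw [eventually_atTop]
    exact ⟨i0, fun i hi => by rw [dist_eq_norm]; exact (hi0 i hi).2⟩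

end Aux

theorem sigma_approximate_diagonal_iff_sigma_virtual_diagonal
    -- A is a Banach algebra
    (A : Type u) [NonUnitalNormedRing A] [NormedSpace ℂ A]
    [IsScalarTower ℂ A A] [SMulCommClass ℂ A A] [CompleteSpace A]
    -- σ is a continuous algebra homomorphism on A
    (σ : A →L[ℂ] A) (hσ : ∀ a b : A, σ (a * b) = σ a * σ b)
    -- E is the projective tensor product A ⊗̂ A
    (E : Type u) [NormedAddCommGroup E] [NormedSpace ℂ E] [CompleteSpace E]
    (tm : A →L[ℂ] A →L[ℂ] E)
    (htm_norm : ∀ a b : A, ‖tm a b‖ = ‖a‖ * ‖b‖)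
    (htm_univ : ∀ (X : Type u) [NormedAddCommGroup X] [NormedSpace ℂ X]
      [CompleteSpace X] (f : A →L[ℂ] A →L[ℂ] X),
      ∃! g : E →L[ℂ] X, (∀ a b : A, g (tm a b) = f a b) ∧ ‖g‖ = ‖f‖)
    -- the A-bimodule actions on E
    (l r : A →L[ℂ] E →L[ℂ] E)
    (hl : ∀ a b c : A, l a (tm b c) = tm (a * b) c)
    (hr : ∀ a b c : A, r a (tm b c) = tm b (c * a))
    -- the diagonal map π
    (pr : E →L[ℂ] A)
    (hpr : ∀ a b : A, pr (tm a b) = a * b) :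
    -- an approximate diagonal yields a virtual diagonal, and in fact the two
    -- notions are equivalent
    (HasSigmaApproximateDiagonal A σ E l r pr →
      HasSigmaVirtualDiagonal A σ E l r pr) ∧
    (HasSigmaVirtualDiagonal A σ E l r pr ↔
      HasSigmaApproximateDiagonal A σ E l r pr) := by
  
  have fwd : HasSigmaApproximateDiagonal A σ E l r pr →
      HasSigmaVirtualDiagonal A σ E l r pr := by
    rintro ⟨ι, pι, hne, hdir, m, C, hC, h⟩
    exact ad_to_vd A σ E l r pr ι pι hne hdir m C hC h
  have bwd : HasSigmaVirtualDiagonal A σ E l r pr →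
      HasSigmaApproximateDiagonal A σ E l r pr := by
    rintro ⟨M, hM1, hM2⟩
    exact vd_to_ad A σ E l r pr (‖M‖ + 1)
      (fun F ε hε => vd_key A σ E l r pr M hM1 hM2 F ε hε)
  exact ⟨fwd, ⟨bwd, fwd⟩⟩
end

section
/- Let A be a Banach algebra and σ : A → A a continuous algebra homomorphism with dense range. If A has a σ-approximate diagonal, then A has an approximate diagonal, i.e., a bounded net (m_α) in A ⊗̂ A such that a·m_α − m_α·a → 0 and a·π(m_α) → a in norm for every a ∈ A. -/
/-!
Statement 12: Let A be a Banach algebra and σ : A → A a continuous algebra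
homomorphism with dense range. If A has a σ-approximate diagonal, then A
has an approximate diagonal: a bounded net (m_α) in A ⊗̂ A with
a·m_α − m_α·a → 0 and a·π(m_α) → a in norm for every a ∈ A.

The projective tensor product `A ⊗̂ A` is modelled abstractly as a Banach
space `E` with a continuous bilinear cross-norm map `tm` satisfying the
isometric universal property, the canonical `A`-bimodule actions `l`, `r`
and the diagonal map `pr`.
-/

universe u

open Filter

set_option maxHeartbeats 1000000 in
theorem sigma_approx_diagonal_implies_approx_diagonal
    -- A is a Banach algebra
    (A : Type u) [NonUnitalNormedRing A] [NormedSpace ℂ A]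
    [IsScalarTower ℂ A A] [SMulCommClass ℂ A A] [CompleteSpace A]
    -- σ is a continuous algebra homomorphism on A with dense range
    (σ : A →L[ℂ] A) (hσ : ∀ a b : A, σ (a * b) = σ a * σ b)
    (hdense : DenseRange ⇑σ)
    -- E is the projective tensor product A ⊗̂ A
    (E : Type u) [NormedAddCommGroup E] [NormedSpace ℂ E] [CompleteSpace E]
    (tm : A →L[ℂ] A →L[ℂ] E)
    (htm_norm : ∀ a b : A, ‖tm a b‖ = ‖a‖ * ‖b‖)
    (htm_univ : ∀ (X : Type u) [NormedAddCommGroup X] [NormedSpace ℂ X]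
      [CompleteSpace X] (f : A →L[ℂ] A →L[ℂ] X),
      ∃! g : E →L[ℂ] X, (∀ a b : A, g (tm a b) = f a b) ∧ ‖g‖ = ‖f‖)
    -- the A-bimodule actions on E
    (l r : A →L[ℂ] E →L[ℂ] E)
    (hl : ∀ a b c : A, l a (tm b c) = tm (a * b) c)
    (hr : ∀ a b c : A, r a (tm b c) = tm b (c * a))
    -- the diagonal map π
    (pr : E →L[ℂ] A)
    (hpr : ∀ a b : A, pr (tm a b) = a * b)
    -- A has a σ-approximate diagonal
    (had : ∃ (ι : Type u) (pι : Preorder ι),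
      Nonempty ι ∧ IsDirected ι (fun i j => pι.le i j) ∧
      ∃ (m : ι → E) (C : ℝ),
        (∀ i, ‖m i‖ ≤ C) ∧
        ∀ a : A,
          Tendsto (fun i => r (σ a) (m i) - l (σ a) (m i))
            (@Filter.atTop ι pι) (nhds 0) ∧
          Tendsto (fun i => pr (m i) * σ a) (@Filter.atTop ι pι)
            (nhds (σ a))) :
    -- Then A has an approximate diagonal
    ∃ (ι : Type u) (pι : Preorder ι),
      Nonempty ι ∧ IsDirected ι (fun i j => pι.le i j) ∧
      ∃ (m : ι → E) (C : ℝ),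
        (∀ i, ‖m i‖ ≤ C) ∧
        ∀ a : A,
          Tendsto (fun i => l a (m i) - r a (m i))
            (@Filter.atTop ι pι) (nhds 0) ∧
          Tendsto (fun i => a * pr (m i)) (@Filter.atTop ι pι) (nhds a) := by
  classical
  obtain ⟨ι, pι, hne, hdir, m, C, hC, hm⟩ := had
  have hC0 : 0 ≤ C := le_trans (norm_nonneg _) (hC hne.some)
  -- Density of the span of elementary tensors, in the weak form we need:
  -- any continuous linear map into A vanishing on tensors is zero
  -- (provided A is nontrivial).
  have hdensity : ∀ g : E →L[ℂ] A, (∀ a b : A, g (tm a b) = 0) →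
      (∃ a₀ : A, a₀ ≠ 0) → g = 0 := by
    intro g hg ⟨a₀, ha₀⟩
    by_contra hgne
    have hg0 : ‖g‖ ≠ 0 := fun h => hgne ((ContinuousLinearMap.opNorm_zero_iff g).mp h)
    have hgpos : 0 < ‖g‖ := lt_of_le_of_ne (norm_nonneg _) (Ne.symm hg0)
    have ha₀n : 0 < ‖a₀‖ := norm_pos_iff.mpr ha₀
    have htm1 : (1:ℝ) ≤ ‖tm‖ := by
      have h1 : ‖tm a₀ a₀‖ ≤ ‖tm‖ * ‖a₀‖ * ‖a₀‖ := tm.le_opNorm₂ a₀ a₀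
      rw [htm_norm] at h1
      nlinarith [mul_pos ha₀n ha₀n]
    obtain ⟨g₁, ⟨hg₁, hg₁n⟩, -⟩ := htm_univ E tm
    set F : A →L[ℂ] A →L[ℂ] (E × A) :=
      ((ContinuousLinearMap.compL ℂ A E (E × A)) (ContinuousLinearMap.inl ℂ E A)).comp tm
      with hFdef
    have hF : ∀ a b, F a b = (tm a b, (0:A)) := fun a b => rfl
    have hFn : ∀ a b : A, ‖F a b‖ = ‖tm a b‖ := by
      intro a b
      rw [hF]
      simp [Prod.norm_def]
    have hFnorm : ‖F‖ = ‖tm‖ := by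
      apply le_antisymm
      · refine ContinuousLinearMap.opNorm_le_bound _ (norm_nonneg tm) fun a => ?_
        refine ContinuousLinearMap.opNorm_le_bound _ (by positivity) fun b => ?_
        rw [hFn]
        calc ‖tm a b‖ ≤ ‖tm‖ * ‖a‖ * ‖b‖ := tm.le_opNorm₂ a b
          _ = ‖tm‖ * ‖a‖ * ‖b‖ := rfl
      · refine ContinuousLinearMap.opNorm_le_bound _ (norm_nonneg F) fun a => ?_
        refine ContinuousLinearMap.opNorm_le_bound _ (by positivity) fun b => ?_
        calc ‖tm a b‖ = ‖F a b‖ := (hFn a b).symm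
          _ ≤ ‖F‖ * ‖a‖ * ‖b‖ := F.le_opNorm₂ a b
    obtain ⟨G, -, hGuniq⟩ := htm_univ (E × A) F
    set t : ℂ := ((‖g‖ : ℝ) : ℂ)⁻¹ with htdef
    have ht : t ≠ 0 := by
      simp only [htdef, ne_eq, inv_eq_zero, Complex.ofReal_eq_zero]
      exact hg0
    have hGt : ‖t • g‖ = 1 := by
      have hts : ‖t • g‖ = ‖t‖ * ‖g‖ := norm_smul t g
      rw [hts, htdef, norm_inv, Complex.norm_real, Real.norm_eq_abs,
        abs_of_nonneg (norm_nonneg g), inv_mul_cancel₀ hg0]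
    have hcond₁ : (∀ a b : A, (g₁.prod (0 : E →L[ℂ] A)) (tm a b) = F a b) ∧
        ‖g₁.prod (0 : E →L[ℂ] A)‖ = ‖F‖ := by
      constructor
      · intro a b
        rw [hF]
        simp [ContinuousLinearMap.prod_apply, hg₁]
      · rw [ContinuousLinearMap.opNorm_prod, Prod.norm_def, hFnorm, hg₁n, norm_zero]
        exact max_eq_left (norm_nonneg tm)
    have hcond₂ : (∀ a b : A, (g₁.prod (t • g)) (tm a b) = F a b) ∧
        ‖g₁.prod (t • g)‖ = ‖F‖ := by
      constructor
      · intro a b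
        rw [hF]
        simp [ContinuousLinearMap.prod_apply, hg₁, hg a b]
      · rw [ContinuousLinearMap.opNorm_prod, Prod.norm_def, hFnorm, hGt, hg₁n,
          max_eq_left htm1]
    have heq : g₁.prod (0 : E →L[ℂ] A) = g₁.prod (t • g) :=
      (hGuniq _ hcond₁).trans (hGuniq _ hcond₂).symm
    apply hgne
    ext x
    have := congrArg (fun h : E →L[ℂ] (E × A) => (h x).2) heq
    simp only [ContinuousLinearMap.prod_apply, ContinuousLinearMap.zero_apply,
      ContinuousLinearMap.smul_apply] at this
    have := smul_eq_zero.mp this.symm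
    rcases this with h | h
    · exact absurd h ht
    · simpa using h
  -- module identities for pr ∘ l and pr ∘ r, extended from tensors by density
  have hprl : ∀ (a : A) (x : E), pr (l a x) = a * pr x := by
    intro a x
    rcases eq_or_ne a 0 with rfl | ha
    · simp
    · have h := hdensity (pr.comp (l a) - (ContinuousLinearMap.mul ℂ A a).comp pr)
        (by
          intro b c
          simp [ContinuousLinearMap.sub_apply, ContinuousLinearMap.comp_apply,
            hl, hpr, ContinuousLinearMap.mul_apply', mul_assoc]) ⟨a, ha⟩
      have hx := ContinuousLinearMap.ext_iff.mp h x
      simpa [ContinuousLinearMap.sub_apply, ContinuousLinearMap.comp_apply,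
        ContinuousLinearMap.mul_apply', sub_eq_zero] using hx
  have hprr : ∀ (a : A) (x : E), pr (r a x) = pr x * a := by
    intro a x
    rcases eq_or_ne a 0 with rfl | ha
    · simp
    · have h := hdensity (pr.comp (r a) - ((ContinuousLinearMap.mul ℂ A).flip a).comp pr)
        (by
          intro b c
          simp [ContinuousLinearMap.sub_apply, ContinuousLinearMap.comp_apply,
            hr, hpr, ContinuousLinearMap.flip_apply, ContinuousLinearMap.mul_apply',
            mul_assoc]) ⟨a, ha⟩
      have hx := ContinuousLinearMap.ext_iff.mp h x
      simpa [ContinuousLinearMap.sub_apply, ContinuousLinearMap.comp_apply,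
        ContinuousLinearMap.flip_apply, ContinuousLinearMap.mul_apply', sub_eq_zero] using hx
  refine ⟨ι, pι, hne, hdir, m, C, hC, ?_⟩
  -- step A : for each b, σ b * pr (m i) → σ b
  have stepA : ∀ b : A, Tendsto (fun i => σ b * pr (m i)) (@Filter.atTop ι pι)
      (nhds (σ b)) := by
    intro b
    have h1 := (hm b).1
    have h1' : Tendsto (fun i => pr (m i) * σ b - σ b * pr (m i))
        (@Filter.atTop ι pι) (nhds 0) := by
      have h2 := (pr.continuous.tendsto 0).comp h1
      simpa [Function.comp_def, map_sub, hprl, hprr] using h2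
    have h2 := (hm b).2
    have h3 := h2.sub h1'
    simpa using h3
  intro a
  constructor
  · -- commutator part
    rw [NormedAddCommGroup.tendsto_nhds_zero]
    intro ε hε
    set K : ℝ := (‖l‖ + ‖r‖) * C + 1 with hKdef
    have hK0 : 0 < K := by positivity
    set δ : ℝ := ε / (2 * K) with hδdef
    have hδ : 0 < δ := by positivity
    have hδK : δ * (2 * K) = ε := div_mul_cancel₀ ε (by positivity)
    obtain ⟨b, hb⟩ := hdense.exists_dist_lt a hδ
    have hb' : ‖a - σ b‖ < δ := by rwa [dist_eq_norm] at hb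
    have h1 := (hm b).1
    rw [NormedAddCommGroup.tendsto_nhds_zero] at h1
    filter_upwards [h1 (ε / 2) (by positivity)] with i hi
    have key : l a (m i) - r a (m i)
        = (l (a - σ b) (m i) - r (a - σ b) (m i))
          - (r (σ b) (m i) - l (σ b) (m i)) := by
      simp only [map_sub, ContinuousLinearMap.sub_apply]
      abel
    have e1 : ‖l (a - σ b) (m i)‖ ≤ ‖l‖ * δ * C := by
      calc ‖l (a - σ b) (m i)‖ ≤ ‖l (a - σ b)‖ * ‖m i‖ := (l _).le_opNorm _
        _ ≤ (‖l‖ * ‖a - σ b‖) * C :=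
            mul_le_mul (l.le_opNorm _) (hC i) (norm_nonneg _) (by positivity)
        _ ≤ ‖l‖ * δ * C := by nlinarith [norm_nonneg l, hb'.le, hC0, mul_nonneg (norm_nonneg l) hC0, mul_nonneg (norm_nonneg (a - σ b)) hC0]
    have e2 : ‖r (a - σ b) (m i)‖ ≤ ‖r‖ * δ * C := by
      calc ‖r (a - σ b) (m i)‖ ≤ ‖r (a - σ b)‖ * ‖m i‖ := (r _).le_opNorm _
        _ ≤ (‖r‖ * ‖a - σ b‖) * C :=
            mul_le_mul (r.le_opNorm _) (hC i) (norm_nonneg _) (by positivity)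
        _ ≤ ‖r‖ * δ * C := by nlinarith [norm_nonneg r, hb'.le, hC0, mul_nonneg (norm_nonneg r) hC0, mul_nonneg (norm_nonneg (a - σ b)) hC0]
    rw [key]
    calc ‖(l (a - σ b) (m i) - r (a - σ b) (m i)) - (r (σ b) (m i) - l (σ b) (m i))‖
        ≤ ‖l (a - σ b) (m i) - r (a - σ b) (m i)‖ + ‖r (σ b) (m i) - l (σ b) (m i)‖ :=
          norm_sub_le _ _
      _ ≤ (‖l (a - σ b) (m i)‖ + ‖r (a - σ b) (m i)‖) + ‖r (σ b) (m i) - l (σ b) (m i)‖ := by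
          gcongr
          exact norm_sub_le _ _
      _ < (‖l‖ * δ * C + ‖r‖ * δ * C) + ε / 2 :=
          add_lt_add_of_le_of_lt (add_le_add e1 e2) hi
      _ < ε := by nlinarith [mul_pos hδ hK0, hδK, hδ, hKdef]
  · -- the π part
    rw [Metric.tendsto_nhds]
    intro ε hε
    set K : ℝ := ‖pr‖ * C + 2 with hKdef
    have hK0 : 0 < K := by positivity
    set δ : ℝ := ε / (2 * K) with hδdef
    have hδ : 0 < δ := by positivity
    have hδK : δ * (2 * K) = ε := div_mul_cancel₀ ε (by positivity)
    obtain ⟨b, hb⟩ := hdense.exists_dist_lt a hδ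
    have hb' : ‖a - σ b‖ < δ := by rwa [dist_eq_norm] at hb
    have h1 := Metric.tendsto_nhds.mp (stepA b) (ε / 2) (by positivity)
    filter_upwards [h1] with i hi
    rw [dist_eq_norm] at hi ⊢
    have key : a * pr (m i) - a
        = (a - σ b) * pr (m i) + (σ b * pr (m i) - σ b) + (σ b - a) := by rw [sub_mul]; abel
    have e1 : ‖(a - σ b) * pr (m i)‖ ≤ δ * (‖pr‖ * C) := by
      calc ‖(a - σ b) * pr (m i)‖ ≤ ‖a - σ b‖ * ‖pr (m i)‖ := norm_mul_le _ _
        _ ≤ δ * (‖pr‖ * C) := by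
            have h2 : ‖pr (m i)‖ ≤ ‖pr‖ * C :=
              le_trans (pr.le_opNorm _) (by
                have := hC i
                nlinarith [norm_nonneg pr])
            exact mul_le_mul hb'.le h2 (norm_nonneg _) hδ.le
    have e3 : ‖σ b - a‖ < δ := by rwa [norm_sub_rev] at hb'
    rw [key]
    calc ‖(a - σ b) * pr (m i) + (σ b * pr (m i) - σ b) + (σ b - a)‖
        ≤ ‖(a - σ b) * pr (m i)‖ + ‖σ b * pr (m i) - σ b‖ + ‖σ b - a‖ :=
          norm_add₃_le
      _ < δ * (‖pr‖ * C) + ε / 2 + δ :=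
          add_lt_add (add_lt_add_of_le_of_lt e1 hi) e3
      _ ≤ ε := by nlinarith [mul_pos hδ hK0, hδK, hδ, hKdef]
end
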